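/- Let G be a finite connected simple graph with n vertices and m edges, A its adjacency matrix, D the diagonal degree matrix, B the arc-adjacency matrix and J₀ the arc-inversion matrix. Then for every t ∈ ℂ, det(I_{2m} − t·(B − J₀)) = (1 − t²)^{m−n} · det(I_n − t·A + t²·(D − I_n)). (This is the equality of the Hashimoto-type and Bass-type determinant expressions for the reciprocal of the Ihara zeta function of G, where the Betti number r satisfies r − 1 = m − n.) -/

import Mathlib

noncomputable section

variable {V : Type*}

/-- The arc-adjacency matrix B: `B e f = 1` if `t(e) = o(f)`, else 0. -/
def arcAdjMatrix [Fintype V] [DecidableEq V] (G : SimpleGraph V) [DecidableRel G.Adj] :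
    Matrix G.Dart G.Dart ℂ := fun e f =>
  if e.toProd.2 = f.toProd.1 then 1 else 0

/-- The arc-inversion matrix J₀: `(J₀) e f = 1` if `f = e⁻¹`, else 0. -/
def arcInvMatrix [Fintype V] [DecidableEq V] (G : SimpleGraph V) [DecidableRel G.Adj] :
    Matrix G.Dart G.Dart ℂ := fun e f =>
  if f = e.symm then 1 else 0

/-- The diagonal degree matrix D. -/
def degMatrix [Fintype V] [DecidableEq V] (G : SimpleGraph V) [DecidableRel G.Adj] :
    Matrix V V ℂ :=
  Matrix.diagonal fun u => (G.degree u : ℂ)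

set_option linter.unusedSectionVars false
set_option linter.unusedVariables false

namespace IharaAux
open Matrix Finset
variable [Fintype V] [DecidableEq V] (G : SimpleGraph V) [DecidableRel G.Adj]

/-- Origin incidence matrix, `S v e = 1` iff `o(e) = v`. -/
def Sm : Matrix V G.Dart ℂ := fun v e => if e.toProd.1 = v then 1 else 0

/-- Transposed terminal incidence matrix, `T' e v = 1` iff `t(e) = v`. -/
def Tm : Matrix G.Dart V ℂ := fun e v => if e.toProd.2 = v then 1 else 0

/-- Transposed origin incidence matrix. -/
def Sm' : Matrix G.Dart V ℂ := fun e v => if e.toProd.1 = v then 1 else 0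

lemma Tm_mul_Sm : Tm G * Sm G = arcAdjMatrix G := by
  ext e f
  simp [Matrix.mul_apply, Tm, Sm, arcAdjMatrix, ite_and, eq_comm]

lemma J_mul_J : arcInvMatrix G * arcInvMatrix G = 1 := by
  ext e f
  rw [Matrix.mul_apply, Finset.sum_eq_single e.symm]
  · simp [arcInvMatrix, Matrix.one_apply, eq_comm]
  · intro b _ hb
    simp [arcInvMatrix, hb]
  · simp

lemma J_mul_Tm : arcInvMatrix G * Tm G = Sm' G := by
  ext e v
  rw [Matrix.mul_apply, Finset.sum_eq_single e.symm]
  · simp [arcInvMatrix, Tm, Sm']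
  · intro b _ hb
    simp [arcInvMatrix, hb]
  · simp

lemma Sm_mul_Tm : Sm G * Tm G = G.adjMatrix ℂ := by
  ext u w
  rw [Matrix.mul_apply]
  simp only [Sm, Tm, ite_mul, one_mul, zero_mul, SimpleGraph.adjMatrix_apply]
  by_cases h : G.Adj u w
  · rw [Finset.sum_eq_single (SimpleGraph.Dart.mk (u, w) h)]
    · simp [h]
    · rintro d - hd
      simp only [ite_eq_right_iff]
      intro h1 h2
      exact absurd (SimpleGraph.Dart.ext _ _ (Prod.ext h1 h2)) hd
    · simp
  · rw [if_neg h]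
    apply Finset.sum_eq_zero
    rintro d -
    simp only [ite_eq_right_iff]
    intro h1 h2
    exact absurd (h1 ▸ h2 ▸ d.adj) h

lemma Sm_mul_Sm' : Sm G * Sm' G = degMatrix G := by
  ext u w
  rw [Matrix.mul_apply]
  simp only [Sm, Sm', ite_mul, one_mul, zero_mul, degMatrix, Matrix.diagonal_apply]
  by_cases h : u = w
  · subst h
    rw [if_pos rfl, ← SimpleGraph.dart_fst_fiber_card_eq_degree G u, ← Finset.sum_boole]
    apply Finset.sum_congr rfl
    intro d _
    by_cases hd : d.toProd.1 = u <;> simp [hd]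
  · rw [if_neg h]
    apply Finset.sum_eq_zero
    rintro d -
    simp only [ite_eq_right_iff]
    intro h1 h2
    exact absurd (h1.symm.trans h2) h

def keyF : V → ℕ := fun v => (Fintype.equivFin V v : ℕ)

lemma keyF_inj : Function.Injective (keyF (V := V)) := fun a b h =>
  (Fintype.equivFin V).injective (Fin.val_injective h)

abbrev Pos : Type _ := {d : G.Dart // keyF d.toProd.1 < keyF d.toProd.2}

lemma not_pos_symm (d : Pos G) : ¬ keyF d.1.symm.toProd.1 < keyF d.1.symm.toProd.2 := by
  have := d.2
  simp only [SimpleGraph.Dart.symm_toProd, Prod.fst_swap, Prod.snd_swap]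
  omega

lemma pos_ne_symm (d d' : Pos G) : d.1 ≠ d'.1.symm := by
  intro h
  have h1 := d.2
  have h2 := d'.2
  rw [h] at h1
  simp only [SimpleGraph.Dart.symm_toProd, Prod.fst_swap, Prod.snd_swap] at h1
  omega

def dartEquiv : G.Dart ≃ (Pos G) ⊕ (Pos G) where
  toFun d :=
    if h : keyF d.toProd.1 < keyF d.toProd.2 then .inl ⟨d, h⟩
    else .inr ⟨d.symm, by
      have hne : keyF d.toProd.1 ≠ keyF d.toProd.2 := fun hc => d.adj.ne (keyF_inj hc)
      simp only [SimpleGraph.Dart.symm_toProd, Prod.fst_swap, Prod.snd_swap]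
      omega⟩
  invFun := Sum.elim (fun d => d.1) (fun d => d.1.symm)
  left_inv d := by
    by_cases h : keyF d.toProd.1 < keyF d.toProd.2
    · simp [h]
    · simp [h]
  right_inv x := by
    cases x with
    | inl d =>
      exact dif_pos d.2
    | inr d =>
      simp only [Sum.elim_inr]
      erw [dif_neg (not_pos_symm G d)]
      exact congrArg Sum.inr (Subtype.ext (SimpleGraph.Dart.symm_symm d.1))

lemma dartEquiv_symm_inl (d : Pos G) : (dartEquiv G).symm (Sum.inl d) = d.1 := rfl
lemma dartEquiv_symm_inr (d : Pos G) : (dartEquiv G).symm (Sum.inr d) = d.1.symm := rfl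

lemma det_one_sub_smul_J (t : ℂ) :
    ((1 : Matrix G.Dart G.Dart ℂ) - t • arcInvMatrix G).det
      = (1 - t ^ 2) ^ (Fintype.card (Pos G)) := by
  rw [← Matrix.det_reindex_self (dartEquiv G)]
  have hsymm_inj : ∀ a b : G.Dart, a.symm = b.symm ↔ a = b :=
    fun a b => SimpleGraph.Dart.symm_involutive.injective.eq_iff
  have hM : ∀ x y : G.Dart, ((1 : Matrix G.Dart G.Dart ℂ) - t • arcInvMatrix G) x y
      = (if x = y then 1 else 0) - t * (if y = x.symm then 1 else 0) := by
    intro x y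
    simp [arcInvMatrix, Matrix.one_apply, Matrix.sub_apply, Matrix.smul_apply]
  have hre : (Matrix.reindex (dartEquiv G) (dartEquiv G)
      ((1 : Matrix G.Dart G.Dart ℂ) - t • arcInvMatrix G))
      = Matrix.fromBlocks 1 (-(t • 1)) (-(t • 1)) 1 := by
    ext i j
    rcases i with d | d <;> rcases j with d' | d' <;>
      rw [Matrix.reindex_apply, Matrix.submatrix_apply]
    · rw [dartEquiv_symm_inl, dartEquiv_symm_inl, hM, Matrix.fromBlocks_apply₁₁,
        if_neg (show ¬((↑d' : G.Dart) = (↑d : G.Dart).symm) from pos_ne_symm G d' d)]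
      by_cases h : d = d'
      · subst h; simp
      · rw [if_neg (show ¬((↑d : G.Dart) = (↑d' : G.Dart)) from fun hh => h (Subtype.ext hh))]
        simp [Matrix.one_apply, h]
    · rw [dartEquiv_symm_inl, dartEquiv_symm_inr, hM, Matrix.fromBlocks_apply₁₂,
        if_neg (show ¬((↑d : G.Dart) = (↑d' : G.Dart).symm) from pos_ne_symm G d d')]
      by_cases h : d = d'
      · subst h; simp
      · rw [if_neg (show ¬((↑d' : G.Dart).symm = (↑d : G.Dart).symm) from
          fun hh => h (Subtype.ext ((hsymm_inj _ _).mp hh)).symm)]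
        simp [Matrix.one_apply, h]
    · rw [dartEquiv_symm_inr, dartEquiv_symm_inl, hM, Matrix.fromBlocks_apply₂₁,
        if_neg (show ¬((↑d : G.Dart).symm = (↑d' : G.Dart)) from
          fun hh => pos_ne_symm G d' d hh.symm),
        SimpleGraph.Dart.symm_symm]
      by_cases h : d = d'
      · subst h; simp
      · rw [if_neg (show ¬((↑d' : G.Dart) = (↑d : G.Dart)) from
          fun hh => h (Subtype.ext hh).symm)]
        simp [Matrix.one_apply, h]
    · rw [dartEquiv_symm_inr, dartEquiv_symm_inr, hM, Matrix.fromBlocks_apply₂₂,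
        SimpleGraph.Dart.symm_symm,
        if_neg (show ¬((↑d' : G.Dart).symm = (↑d : G.Dart)) from
          fun hh => pos_ne_symm G d d' hh.symm)]
      by_cases h : d = d'
      · subst h; simp
      · rw [if_neg (show ¬((↑d : G.Dart).symm = (↑d' : G.Dart).symm) from
          fun hh => h (Subtype.ext ((hsymm_inj _ _).mp hh)))]
        simp [Matrix.one_apply, h]
  rw [hre, Matrix.det_fromBlocks_one₂₂]
  have : (1 : Matrix (Pos G) (Pos G) ℂ) - -(t • 1) * -(t • 1) = (1 - t ^ 2) • 1 := by
    rw [Matrix.neg_mul, Matrix.mul_neg, neg_neg, Matrix.smul_mul, Matrix.mul_smul, smul_smul,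
      Matrix.one_mul, sub_smul, one_smul, pow_two]
  rw [this, Matrix.det_smul, Matrix.det_one, mul_one]

lemma card_pos_eq : Fintype.card (Pos G) = G.edgeFinset.card := by
  have h1 : Fintype.card G.Dart = Fintype.card (Pos G) + Fintype.card (Pos G) := by
    rw [Fintype.card_congr (dartEquiv G), Fintype.card_sum]
  have h2 := SimpleGraph.dart_card_eq_twice_card_edges G
  omega

lemma key_det (t : ℂ) (h1 : (1 : ℂ) - t ^ 2 ≠ 0) :
    (1 - t ^ 2) ^ (Fintype.card V) *
        ((1 : Matrix G.Dart G.Dart ℂ) - t • (arcAdjMatrix G - arcInvMatrix G)).det =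
      (1 - t ^ 2) ^ G.edgeFinset.card *
        ((1 : Matrix V V ℂ) - t • (G.adjMatrix ℂ) + t ^ 2 • (degMatrix G - 1)).det := by
  classical
  set n := Fintype.card V with hn
  set m := G.edgeFinset.card with hm
  have hcard : Fintype.card G.Dart = 2 * m := SimpleGraph.dart_card_eq_twice_card_edges G
  set a : ℂ := 1 - t ^ 2 with ha
  set c : ℂ := -(t / a) with hc
  have hac : a * c = -t := by
    rw [hc]
    field_simp
  set X : Matrix G.Dart V ℂ := Tm G - t • Sm' G with hX
  -- key multiplicative identity
  have key1 : (1 - t • arcInvMatrix G) *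
      ((1 : Matrix G.Dart G.Dart ℂ) - t • (arcAdjMatrix G - arcInvMatrix G))
      = a • 1 - t • (X * Sm G) := by
    have hB : arcAdjMatrix G = Tm G * Sm G := (Tm_mul_Sm G).symm
    have hJJ := J_mul_J G
    have hJT := J_mul_Tm G
    rw [hB, hX, ha]
    simp only [mul_sub, sub_mul, Matrix.mul_sub, Matrix.sub_mul, mul_one, one_mul,
      Matrix.mul_smul, Matrix.smul_mul, smul_sub, smul_smul, sub_smul, one_smul,
      ← Matrix.mul_assoc, hJJ, hJT]
    module
  have detJ : ((1 : Matrix G.Dart G.Dart ℂ) - t • arcInvMatrix G).det = a ^ m := by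
    rw [det_one_sub_smul_J, card_pos_eq]
  have e1 : a ^ m * ((1 : Matrix G.Dart G.Dart ℂ)
        - t • (arcAdjMatrix G - arcInvMatrix G)).det
      = (a • (1 : Matrix G.Dart G.Dart ℂ) - t • (X * Sm G)).det := by
    rw [← detJ, ← Matrix.det_mul, key1]
  have e2 : a • ((1 : Matrix G.Dart G.Dart ℂ) + (c • X) * Sm G)
      = a • (1 : Matrix G.Dart G.Dart ℂ) - t • (X * Sm G) := by
    rw [smul_add, Matrix.smul_mul, smul_smul, hac, neg_smul, ← sub_eq_add_neg]
  have e3 : (a • ((1 : Matrix G.Dart G.Dart ℂ) + (c • X) * Sm G)).det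
      = a ^ (2 * m) * ((1 : Matrix G.Dart G.Dart ℂ) + (c • X) * Sm G).det := by
    rw [Matrix.det_smul, hcard]
  have e4 : ((1 : Matrix G.Dart G.Dart ℂ) + (c • X) * Sm G).det
      = ((1 : Matrix V V ℂ) + Sm G * (c • X)).det := Matrix.det_one_add_mul_comm _ _
  have e5 : Sm G * (c • X) = c • (G.adjMatrix ℂ - t • degMatrix G) := by
    rw [Matrix.mul_smul, hX, Matrix.mul_sub, Matrix.mul_smul, Sm_mul_Tm, Sm_mul_Sm']
  have e6 : a • ((1 : Matrix V V ℂ) + c • (G.adjMatrix ℂ - t • degMatrix G))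
      = (1 : Matrix V V ℂ) - t • (G.adjMatrix ℂ) + t ^ 2 • (degMatrix G - 1) := by
    rw [smul_add, smul_smul, hac, ha]
    module
  have f1 : a ^ m * ((1 : Matrix G.Dart G.Dart ℂ)
        - t • (arcAdjMatrix G - arcInvMatrix G)).det
      = a ^ (2 * m) * ((1 : Matrix V V ℂ)
        + c • (G.adjMatrix ℂ - t • degMatrix G)).det := by
    rw [e1, ← e2, e3, e4, e5]
  have f2 : a ^ n * ((1 : Matrix V V ℂ) + c • (G.adjMatrix ℂ - t • degMatrix G)).det
      = ((1 : Matrix V V ℂ) - t • (G.adjMatrix ℂ) + t ^ 2 • (degMatrix G - 1)).det := by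
    rw [← e6, Matrix.det_smul, hn]
  apply mul_left_cancel₀ (pow_ne_zero m h1)
  rw [← ha] at *
  linear_combination a ^ n * f1 + a ^ (2 * m) * f2

lemma eval_det {k : Type*} [Fintype k] [DecidableEq k] (M : Matrix k k (Polynomial ℂ))
    (s : ℂ) : (M.det).eval s = (M.map (Polynomial.eval s)).det := by
  rw [← Polynomial.coe_evalRingHom, RingHom.map_det, RingHom.mapMatrix_apply]

end IharaAux

theorem ihara_bass_determinant [Fintype V] [DecidableEq V] (G : SimpleGraph V)
    [DecidableRel G.Adj] (hG : G.Connected) (n m : ℕ) (hn : n = Fintype.card V)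
    (hm : m = G.edgeFinset.card) :
    ∀ t : ℂ,
      (1 - t ^ 2) ^ n *
          ((1 : Matrix G.Dart G.Dart ℂ) - t • (arcAdjMatrix G - arcInvMatrix G)).det =
        (1 - t ^ 2) ^ m *
          ((1 : Matrix V V ℂ) - t • (G.adjMatrix ℂ) +
            t ^ 2 • (degMatrix G - 1)).det := by
  intro t
  subst hn
  subst hm
  have hP : ∀ s : ℂ,
      (((1 - Polynomial.X ^ 2) ^ (Fintype.card V) *
        ((1 : Matrix G.Dart G.Dart (Polynomial ℂ)) -
          (Polynomial.X : Polynomial ℂ) • ((arcAdjMatrix G - arcInvMatrix G).map Polynomial.C)).det)).eval s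
      = (1 - s ^ 2) ^ (Fintype.card V) *
        ((1 : Matrix G.Dart G.Dart ℂ) - s • (arcAdjMatrix G - arcInvMatrix G)).det := by
    intro s
    rw [Polynomial.eval_mul, Polynomial.eval_pow, Polynomial.eval_sub, Polynomial.eval_one,
      Polynomial.eval_pow, Polynomial.eval_X, IharaAux.eval_det]
    have hmm : ((1 : Matrix G.Dart G.Dart (Polynomial ℂ)) -
        (Polynomial.X : Polynomial ℂ) • ((arcAdjMatrix G - arcInvMatrix G).map Polynomial.C)).map
          (Polynomial.eval s)
        = (1 : Matrix G.Dart G.Dart ℂ) - s • (arcAdjMatrix G - arcInvMatrix G) := by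
      ext i j
      simp [Matrix.map_apply, Matrix.sub_apply, Matrix.smul_apply, Matrix.one_apply,
        apply_ite (Polynomial.eval s)]
    rw [hmm]
  have hQ : ∀ s : ℂ,
      (((1 - Polynomial.X ^ 2) ^ (G.edgeFinset.card) *
        ((1 : Matrix V V (Polynomial ℂ)) -
          (Polynomial.X : Polynomial ℂ) • ((G.adjMatrix ℂ).map Polynomial.C) +
          ((Polynomial.X : Polynomial ℂ) ^ 2) • ((degMatrix G - 1).map Polynomial.C)).det)).eval s
      = (1 - s ^ 2) ^ (G.edgeFinset.card) *
        ((1 : Matrix V V ℂ) - s • (G.adjMatrix ℂ) + s ^ 2 • (degMatrix G - 1)).det := by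
    intro s
    rw [Polynomial.eval_mul, Polynomial.eval_pow, Polynomial.eval_sub, Polynomial.eval_one,
      Polynomial.eval_pow, Polynomial.eval_X, IharaAux.eval_det]
    have hmm : ((1 : Matrix V V (Polynomial ℂ)) -
        (Polynomial.X : Polynomial ℂ) • ((G.adjMatrix ℂ).map Polynomial.C) +
        ((Polynomial.X : Polynomial ℂ) ^ 2) • ((degMatrix G - 1).map Polynomial.C)).map
          (Polynomial.eval s)
        = (1 : Matrix V V ℂ) - s • (G.adjMatrix ℂ) + s ^ 2 • (degMatrix G - 1) := by
      ext i j
      simp [Matrix.map_apply, Matrix.sub_apply, Matrix.add_apply, Matrix.smul_apply,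
        Matrix.one_apply, apply_ite (Polynomial.eval s)]
    rw [hmm]
  have hfin : {x : ℂ | 1 - x ^ 2 = 0}.Finite := by
    apply Set.Finite.subset ((Set.finite_singleton (-1 : ℂ)).insert 1)
    intro x hx
    simp only [Set.mem_setOf_eq] at hx
    have hx' : (x - 1) * (x + 1) = 0 := by linear_combination -hx
    rcases mul_eq_zero.mp hx' with h | h
    · have hx1 : x = 1 := by linear_combination h
      simp [hx1]
    · have hx1 : x = -1 := by linear_combination h
      simp [hx1]
  have hinf : {x : ℂ | 1 - x ^ 2 ≠ 0}.Infinite := hfin.infinite_compl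
  have hPQ : ((1 - Polynomial.X ^ 2) ^ (Fintype.card V) *
        ((1 : Matrix G.Dart G.Dart (Polynomial ℂ)) -
          (Polynomial.X : Polynomial ℂ) • ((arcAdjMatrix G - arcInvMatrix G).map Polynomial.C)).det)
      = ((1 - Polynomial.X ^ 2) ^ (G.edgeFinset.card) *
        ((1 : Matrix V V (Polynomial ℂ)) -
          (Polynomial.X : Polynomial ℂ) • ((G.adjMatrix ℂ).map Polynomial.C) +
          ((Polynomial.X : Polynomial ℂ) ^ 2) • ((degMatrix G - 1).map Polynomial.C)).det) := by
    apply Polynomial.eq_of_infinite_eval_eq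
    apply hinf.mono
    intro s hs
    simp only [Set.mem_setOf_eq] at hs ⊢
    rw [hP s, hQ s]
    exact IharaAux.key_det G s hs
  calc (1 - t ^ 2) ^ (Fintype.card V) *
          ((1 : Matrix G.Dart G.Dart ℂ) - t • (arcAdjMatrix G - arcInvMatrix G)).det
      = (((1 - Polynomial.X ^ 2) ^ (Fintype.card V) *
        ((1 : Matrix G.Dart G.Dart (Polynomial ℂ)) -
          (Polynomial.X : Polynomial ℂ) • ((arcAdjMatrix G - arcInvMatrix G).map Polynomial.C)).det)).eval t :=
        (hP t).symm
    _ = (((1 - Polynomial.X ^ 2) ^ (G.edgeFinset.card) *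
        ((1 : Matrix V V (Polynomial ℂ)) -
          (Polynomial.X : Polynomial ℂ) • ((G.adjMatrix ℂ).map Polynomial.C) +
          ((Polynomial.X : Polynomial ℂ) ^ 2) • ((degMatrix G - 1).map Polynomial.C)).det)).eval t := by
        rw [hPQ]
    _ = _ := hQ t
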